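/- Let C ≥ 2 and let p : Fin C → ℝ be a probability vector (p i ≥ 0 for all i and ∑ i, p i = 1). Define p̃ i = (1 - p i)/(C - 1) and the mixture q i = (p i + p̃ i)/2. Then for every i, q i = ((C - 2) * p i + 1)/(2 * (C - 1)); in particular |q i - 1/C| ≤ |p i - 1/C| for every i. -/
import Mathlib


/-- Closed form of the mixture `q = (p + p̃)/2` and its pointwise shrinkage
toward the uniform value `1/C`. -/
theorem mixture_closed_form_and_shrinkage (C : ℕ) (hC : 2 ≤ C) (p : Fin C → ℝ)
    (hp : ∀ i, 0 ≤ p i) (hsum : ∑ i, p i = 1) :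
    ∀ i,
      (p i + (1 - p i) / ((C : ℝ) - 1)) / 2
          = (((C : ℝ) - 2) * p i + 1) / (2 * ((C : ℝ) - 1)) ∧
      |(p i + (1 - p i) / ((C : ℝ) - 1)) / 2 - 1 / C| ≤ |p i - 1 / C| := by
  intro i
  have hC2 : (2 : ℝ) ≤ (C : ℝ) := by exact_mod_cast hC
  have hC1 : (C : ℝ) - 1 ≠ 0 := by linarith
  have hC0 : (C : ℝ) ≠ 0 := by positivity
  constructor
  · field_simp
    ring
  · have hkey : (p i + (1 - p i) / ((C : ℝ) - 1)) / 2 - 1 / C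
        = (((C : ℝ) - 2) / (2 * ((C : ℝ) - 1))) * (p i - 1 / C) := by
      field_simp
      ring
    rw [hkey, abs_mul]
    have h1 : |((C : ℝ) - 2) / (2 * ((C : ℝ) - 1))| ≤ 1 := by
      rw [abs_div, abs_of_nonneg (by linarith), abs_of_nonneg (by linarith)]
      rw [div_le_one (by linarith)]
      linarith
    nlinarith [abs_nonneg (p i - 1 / (C : ℝ))]
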